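/- For every natural number p there exist p polynomials with integer coefficients in m variables whose sign functions form an independent set of attributes on ℝ^m; hence I(Tab(U(m))) = +∞ and for every table T ∈ Tab(U(m)) with cl(T) ≥ 2, R(T) ≥ log_3 cl(T). -/

import Mathlib

open scoped Classical

/-- A `B`-decision table: `dim` columns, rows are pairwise distinct tuples
from `B^dim` (a `Finset`), each row labeled by a decision `dec r : ℕ`. -/
structure Table (B : Type) [Fintype B] [DecidableEq B] where
  dim : ℕ
  rows : Finset (Fin dim → B)
  dec : (Fin dim → B) → ℕ

variable {B : Type} [Fintype B] [DecidableEq B]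

/-- number of rows N(T) -/
def Table.N (T : Table B) : ℕ := T.rows.card

/-- number of decision classes cl(T) -/
def Table.cl (T : Table B) : ℕ := (T.rows.image T.dec).card

/-- `T' ∈ [T]`: `T'` is obtained from `T` by removing columns (keeping an
order-preserving selection `φ` of columns), merging equal rows, and changing
decisions arbitrarily. -/
def SubTable (T T' : Table B) : Prop :=
  ∃ φ : Fin T'.dim → Fin T.dim, StrictMono φ ∧
    T'.rows = T.rows.image (fun r => r ∘ φ)

/-- closed class: C = ⋃_{T ∈ C} [T] -/
def IsClosedClass (C : Set (Table B)) : Prop :=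
  ∀ T ∈ C, ∀ T', SubTable T T' → T' ∈ C

/-- nondegenerate: number of rows of tables in C is unbounded -/
def Nondegenerate (C : Set (Table B)) : Prop :=
  ∀ m : ℕ, ∃ T ∈ C, m ≤ T.N

/-- a test: a set of columns separating any two rows with different decisions -/
def IsTest (T : Table B) (S : Finset (Fin T.dim)) : Prop :=
  ∀ r ∈ T.rows, ∀ r' ∈ T.rows, T.dec r ≠ T.dec r' → ∃ i ∈ S, r i ≠ r' i

/-- a reduct: a test no proper subset of which is a test -/
def IsReduct (T : Table B) (S : Finset (Fin T.dim)) : Prop :=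
  IsTest T S ∧ ∀ S' ⊂ S, ¬ IsTest T S'

/-- R(T): minimum cardinality of a reduct for T -/
noncomputable def R (T : Table B) : ℕ :=
  sInf {m | ∃ S : Finset (Fin T.dim), IsReduct T S ∧ S.card = m}

/-- quasicomplete: rows contain a product of two-element subsets of B -/
def Quasicomplete (T : Table B) : Prop :=
  ∃ Bs : Fin T.dim → Finset B, (∀ i, (Bs i).card = 2) ∧
    ∀ r : Fin T.dim → B, (∀ i, r i ∈ Bs i) → r ∈ T.rows

/-- I(T): maximum dimension of a quasicomplete table in [T] -/
noncomputable def Ival (T : Table B) : ℕ :=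
  sSup {d | ∃ T', SubTable T T' ∧ Quasicomplete T' ∧ T'.dim = d}

/-- N_C(n) = max { N(T) : T ∈ C, dim T ≤ n } -/
noncomputable def NC (C : Set (Table B)) (n : ℕ) : ℕ :=
  sSup {m | ∃ T ∈ C, T.dim ≤ n ∧ T.N = m}

/-- the decision table of the problem over attributes `f 0, …, f (n-1)`:
rows are exactly the tuples realized by objects of the universe. -/
noncomputable def probTable {A : Type} (n : ℕ) (f : Fin n → A → B)
    (d : (Fin n → B) → ℕ) : Table B :=
  ⟨n, Finset.univ.filter (fun r => ∃ a : A, ∀ i, r i = f i a), d⟩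

/-- Tab(U): decision tables of all problems over the information system
with universe `A` and attribute set `F`. -/
def Tab {A : Type} (F : Set (A → B)) : Set (Table B) :=
  {T | ∃ (n : ℕ) (f : Fin n → A → B) (d : (Fin n → B) → ℕ),
    (∀ i, f i ∈ F) ∧ T = probTable n f d}

/-- independence of a family of attributes -/
def Independent {A : Type} (p : ℕ) (f : Fin p → A → B) : Prop :=
  ∃ Bs : Fin p → Finset B, (∀ i, (Bs i).card = 2) ∧
    ∀ b : Fin p → B, (∀ i, b i ∈ Bs i) → ∃ a : A, ∀ i, f i a = b i

/-- F(m): sign functions of polynomials with integer coefficients in m variables -/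
noncomputable def Fsign (m : ℕ) : Set ((Fin m → ℝ) → SignType) :=
  {f | ∃ p : MvPolynomial (Fin m) ℤ,
    f = fun x : Fin m → ℝ => SignType.sign (MvPolynomial.aeval x p : ℝ)}

lemma cl_le_pow_card_of_test {B : Type} [Fintype B] [DecidableEq B]
    (T : Table B) (S : Finset (Fin T.dim)) (hS : IsTest T S) :
    T.cl ≤ Fintype.card B ^ S.card := by
  classical
  set g : (Fin T.dim → B) → (↥S → B) := fun r i => r i with hg
  have key : ∀ r ∈ T.rows, ∀ r' ∈ T.rows, g r = g r' → T.dec r = T.dec r' := by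
    intro r hr r' hr' hgr
    by_contra hne
    obtain ⟨i, hiS, hri⟩ := hS r hr r' hr' hne
    exact hri (congrFun hgr ⟨i, hiS⟩)
  have h1 : T.cl ≤ (T.rows.image g).card := by
    apply Finset.card_le_card_of_surjOn
      (fun v => if h : ∃ r ∈ T.rows, g r = v then T.dec h.choose else 0)
    intro y hy
    simp only [Finset.coe_image, Set.mem_image] at hy ⊢
    obtain ⟨r, hr, rfl⟩ := hy
    refine ⟨g r, ⟨r, hr, rfl⟩, ?_⟩
    have hex : ∃ r' ∈ T.rows, g r' = g r := ⟨r, hr, rfl⟩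
    rw [dif_pos hex]
    obtain ⟨hr', hgr'⟩ := hex.choose_spec
    exact key _ hr' _ hr hgr'
  calc T.cl ≤ (T.rows.image g).card := h1
    _ ≤ Finset.univ.card := Finset.card_le_univ _
    _ = Fintype.card (↥S → B) := Finset.card_univ
    _ = Fintype.card B ^ S.card := by rw [Fintype.card_fun, Fintype.card_coe]

lemma exists_reduct_card_R {B : Type} [Fintype B] [DecidableEq B] (T : Table B) :
    ∃ S : Finset (Fin T.dim), IsReduct T S ∧ S.card = R T := by
  classical
  have huniv : IsTest T (Finset.univ) := by
    intro r hr r' hr' hne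
    have hrr : r ≠ r' := fun h => hne (by rw [h])
    obtain ⟨i, hi⟩ := Function.ne_iff.mp hrr
    exact ⟨i, Finset.mem_univ i, hi⟩
  set Ts : Set ℕ := {k | ∃ S : Finset (Fin T.dim), IsTest T S ∧ S.card = k} with hTsdef
  have hTs : Ts.Nonempty := ⟨_, Finset.univ, huniv, rfl⟩
  obtain ⟨S0, hS0, hcard⟩ := Nat.sInf_mem hTs
  have hred : IsReduct T S0 := by
    refine ⟨hS0, fun S' hS' hS't => ?_⟩
    have h1 : sInf Ts ≤ S'.card := Nat.sInf_le ⟨S', hS't, rfl⟩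
    have hlt : S'.card < S0.card := Finset.card_lt_card hS'
    omega
  have hne : {k | ∃ S : Finset (Fin T.dim), IsReduct T S ∧ S.card = k}.Nonempty :=
    ⟨S0.card, S0, hred, rfl⟩
  obtain ⟨S1, h1, h2⟩ := Nat.sInf_mem hne
  exact ⟨S1, h1, h2⟩

theorem stmt_19 (m : ℕ) (hm : 1 ≤ m) :
    (∀ p : ℕ, ∃ f : Fin p → (Fin m → ℝ) → SignType,
        (∀ i, f i ∈ Fsign m) ∧ Independent p f) ∧
    (∀ n : ℕ, ∃ T ∈ Tab (Fsign m), T.dim = n ∧ Quasicomplete T) ∧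
    (∀ T ∈ Tab (Fsign m), 2 ≤ T.cl → Real.logb 3 T.cl ≤ (R T : ℝ)) := by
  have part1 : ∀ p : ℕ, ∃ f : Fin p → (Fin m → ℝ) → SignType,
      (∀ i, f i ∈ Fsign m) ∧ Independent p f := by
    intro p
    set e := Fintype.equivFin (Fin p → Bool) with he
    have einj : ∀ c1 c2 : Fin p → Bool, ((e c1 : ℕ) : ℝ) = ((e c2 : ℕ) : ℝ) → c1 = c2 := by
      intro c1 c2 h
      apply e.injective
      exact Fin.val_injective (by exact_mod_cast h)
    set Q : Fin p → MvPolynomial (Fin m) ℤ := fun i =>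
      (∏ c ∈ Finset.univ.filter (fun c : Fin p → Bool => c i = false),
        (MvPolynomial.X ⟨0, hm⟩ - MvPolynomial.C ((e c : ℕ) : ℤ))) ^ 2 with hQ
    refine ⟨fun i x => SignType.sign (MvPolynomial.aeval x (Q i) : ℝ),
      fun i => ⟨Q i, rfl⟩, ?_⟩
    have hcard2 : ({SignType.zero, SignType.pos} : Finset SignType).card = 2 := by decide
    refine ⟨fun _ => {SignType.zero, SignType.pos}, fun _ => hcard2, ?_⟩
    intro b hb
    set c : Fin p → Bool := fun i => decide (b i = SignType.pos) with hc
    refine ⟨fun _ => ((e c : ℕ) : ℝ), fun i => ?_⟩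
    have hval : (MvPolynomial.aeval (fun _ : Fin m => ((e c : ℕ) : ℝ)) (Q i) : ℝ)
        = (∏ c' ∈ Finset.univ.filter (fun c' : Fin p → Bool => c' i = false),
            (((e c : ℕ) : ℝ) - ((e c' : ℕ) : ℝ))) ^ 2 := by
      simp [hQ]
    show SignType.sign (MvPolynomial.aeval (fun _ : Fin m => ((e c : ℕ) : ℝ)) (Q i) : ℝ) = b i
    rw [hval]
    have hbi := hb i
    simp only [Finset.mem_insert, Finset.mem_singleton] at hbi
    rcases hbi with h0 | h1
    · -- b i = 0, so c i = false, factor vanishes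
      have hci : c i = false := by simp [hc, h0]
      have : (∏ c' ∈ Finset.univ.filter (fun c' : Fin p → Bool => c' i = false),
            (((e c : ℕ) : ℝ) - ((e c' : ℕ) : ℝ))) = 0 :=
        Finset.prod_eq_zero (Finset.mem_filter.mpr ⟨Finset.mem_univ c, hci⟩) (by ring)
      rw [this, h0]
      norm_num
    · -- b i = pos, so c i = true, all factors nonzero
      have hci : c i = true := by simp [hc, h1]
      have hne : (∏ c' ∈ Finset.univ.filter (fun c' : Fin p → Bool => c' i = false),
            (((e c : ℕ) : ℝ) - ((e c' : ℕ) : ℝ))) ≠ 0 := by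
        apply Finset.prod_ne_zero_iff.mpr
        intro c' hc'
        have hc'i : c' i = false := (Finset.mem_filter.mp hc').2
        have hcc' : c ≠ c' := by
          intro h; rw [h, hc'i] at hci; exact absurd hci (by simp)
        intro hsub
        exact hcc' (einj c c' (sub_eq_zero.mp hsub))
      rw [h1]
      have hpos : (0:ℝ) < (∏ c' ∈ Finset.univ.filter (fun c' : Fin p → Bool => c' i = false),
            (((e c : ℕ) : ℝ) - ((e c' : ℕ) : ℝ))) ^ 2 := pow_two_pos_of_ne_zero hne
      exact sign_pos hpos
  refine ⟨part1, ?_, ?_⟩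
  · intro n
    obtain ⟨f, hf, hind⟩ := part1 n
    obtain ⟨Bs, hBs2, hreal⟩ := hind
    refine ⟨probTable n f (fun _ => 0), ⟨n, f, fun _ => 0, hf, rfl⟩, rfl, ?_⟩
    refine ⟨Bs, hBs2, ?_⟩
    intro r hr
    obtain ⟨a, ha⟩ := hreal r hr
    simp only [probTable, Finset.mem_filter, Finset.mem_univ, true_and]
    exact Finset.mem_filter.mpr ⟨Finset.mem_univ _, a, fun i => (ha i).symm⟩
  · intro T _ hcl
    obtain ⟨S, hred, hcard⟩ := exists_reduct_card_R T
    have hb : T.cl ≤ 3 ^ R T := by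
      have h := cl_le_pow_card_of_test T S hred.1
      rwa [hcard, (by decide : Fintype.card SignType = 3)] at h
    have hclpos : (0:ℝ) < (T.cl : ℝ) := by
      have : 0 < T.cl := by omega
      exact_mod_cast this
    have h1 : Real.logb 3 (T.cl : ℝ) ≤ Real.logb 3 ((3:ℝ) ^ R T) := by
      apply Real.logb_le_logb_of_le (by norm_num) hclpos
      exact_mod_cast hb
    calc Real.logb 3 (T.cl : ℝ) ≤ Real.logb 3 ((3:ℝ) ^ R T) := h1
      _ = (R T : ℝ) := by
          rw [Real.logb_pow, Real.logb_self_eq_one (by norm_num)]; ring
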